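/- arXiv:2001.09634 — 7 statements merged into one kernel-verified Lean document; each statement's English description precedes it below -/
import Mathlib

section
/- Suppose (g_n) is a sequence of positive rationals with g_2 given and g_{n+4} g_{|n−4|} = g_4² g_n² for all n ≡ 2 mod 4, n ≥ 2 (interpreting g_{|2−4|} = g_2). Then for every n ≡ 2 mod 4, g_n = g_2 · g_4^{(n²−4)/16}. -/
/-- Suppose `(gₙ)` is a sequence of positive rationals with
`g (n+4) * g |n−4| = (g 4)² * (g n)²` for all `n ≡ 2 mod 4`, `n ≥ 2`. Then for every
`n ≡ 2 mod 4`, `g n = g 2 * (g 4) ^ ((n²−4)/16)`. -/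
theorem stmt_8 (g : ℕ → ℚ) (hpos : ∀ n, 0 < g n)
    (hrec : ∀ n : ℕ, 2 ≤ n → n % 4 = 2 →
      g (n + 4) * g (((n : ℤ) - 4).natAbs) = (g 4) ^ 2 * (g n) ^ 2) :
    ∀ n : ℕ, n % 4 = 2 → g n = g 2 * (g 4) ^ ((n ^ 2 - 4) / 16) := by
  have key : ∀ k : ℕ, g (4 * k + 2) = g 2 * (g 4) ^ (k * (k + 1)) ∧
      g (4 * (k + 1) + 2) = g 2 * (g 4) ^ ((k + 1) * (k + 2)) := by
    intro k
    induction k with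
    | zero =>
      constructor
      · simp
      · have h := hrec 2 (by norm_num) (by norm_num)
        have h2 : (((2 : ℕ) : ℤ) - 4).natAbs = 2 := by decide
        rw [h2] at h
        have hg2 : g 2 ≠ 0 := (hpos 2).ne'
        have : g 6 = g 4 ^ 2 * g 2 := by
          exact mul_right_cancel₀ hg2 (h.trans (by ring))
        show g 6 = g 2 * g 4 ^ 2
        rw [this]; ring
    | succ k ih =>
      obtain ⟨h1, h2⟩ := ih
      refine ⟨h2, ?_⟩
      have h := hrec (4 * k + 6) (by omega) (by omega)
      have habs : (((4 * k + 6 : ℕ) : ℤ) - 4).natAbs = 4 * k + 2 := by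
        push_cast; omega
      rw [habs] at h
      have e1 : 4 * k + 6 + 4 = 4 * (k + 1 + 1) + 2 := by ring
      have e2 : 4 * k + 6 = 4 * (k + 1) + 2 := by ring
      rw [e1, e2, h1, h2] at h
      have hne : g 2 * g 4 ^ (k * (k + 1)) ≠ 0 :=
        mul_ne_zero (hpos 2).ne' (pow_ne_zero _ (hpos 4).ne')
      have hrhs : g 2 * g 4 ^ ((k + 2) * (k + 3)) * (g 2 * g 4 ^ (k * (k + 1)))
          = g 4 ^ 2 * (g 2 * g 4 ^ ((k + 1) * (k + 2))) ^ 2 := by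
        have he : (k + 2) * (k + 3) + k * (k + 1) = 2 + (k + 1) * (k + 2) * 2 := by ring
        rw [mul_pow, ← pow_mul, mul_mul_mul_comm, ← pow_add, he, pow_add]
        ring
      have := mul_right_cancel₀ hne (h.trans hrhs.symm)
      simpa using this
  intro n hn
  obtain ⟨k, rfl⟩ : ∃ k, n = 4 * k + 2 := ⟨n / 4, by omega⟩
  have hexp : ((4 * k + 2) ^ 2 - 4) / 16 = k * (k + 1) := by
    have : (4 * k + 2) ^ 2 = 16 * (k * (k + 1)) + 4 := by ring
    rw [this, Nat.add_sub_cancel, Nat.mul_div_cancel_left _ (by norm_num)]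
  rw [hexp]
  exact (key k).1
end

section
/- Define sequences by h_1 = 1, h_2 = 2, h_3 = −4, h_4 = −32 and the recurrences h_{4k+1} = −h_{2k−1} h_{2k+1}³, h_{4k+3} = h_{2k+3} h_{2k+1}³, h_{4k} = (h_{2k}/2)(h_{2k+2} h_{2k−1}² − h_{2k−2} h_{2k+1}²) for k ≥ 2, and h_{4k+2} = (h_{2k+1}/2)(h_{2k+3} h_{2k}² − h_{2k−1} h_{2k+2}²) for k ≥ 1. Then h_{2k} = (−1)^{k−1} k 2^{k²} and h_{2k+1} = (−1)^k 2^{k(k+1)} for all k ≥ 0 (resp. k ≥ 1). -/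
/-- If `h 1 = 1`, `h 2 = 2`, `h 3 = −4`, `h 4 = −32` and `h` satisfies the recurrences
`h (4k+1) = −h (2k−1) h (2k+1)³`, `h (4k+3) = h (2k+3) h (2k+1)³`,
`h (4k) = (h (2k)/2)(h (2k+2) h (2k−1)² − h (2k−2) h (2k+1)²)` for `k ≥ 2`, and
`h (4k+2) = (h (2k+1)/2)(h (2k+3) h (2k)² − h (2k−1) h (2k+2)²)` for `k ≥ 1`,
then `h (2k) = (−1)^(k−1) k 2^(k²)` for `k ≥ 1` and `h (2k+1) = (−1)^k 2^(k(k+1))`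
for `k ≥ 0`. -/
theorem stmt_10 (h : ℕ → ℤ)
    (h1 : h 1 = 1) (h2 : h 2 = 2) (h3 : h 3 = -4) (h4 : h 4 = -32)
    (hr1 : ∀ k : ℕ, 1 ≤ k → h (4 * k + 1) = -(h (2 * k - 1)) * (h (2 * k + 1)) ^ 3)
    (hr2 : ∀ k : ℕ, 1 ≤ k → h (4 * k + 3) = h (2 * k + 3) * (h (2 * k + 1)) ^ 3)
    (hr3 : ∀ k : ℕ, 2 ≤ k → 2 * h (4 * k) =
      h (2 * k) * (h (2 * k + 2) * (h (2 * k - 1)) ^ 2 - h (2 * k - 2) * (h (2 * k + 1)) ^ 2))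
    (hr4 : ∀ k : ℕ, 1 ≤ k → 2 * h (4 * k + 2) =
      h (2 * k + 1) * (h (2 * k + 3) * (h (2 * k)) ^ 2 - h (2 * k - 1) * (h (2 * k + 2)) ^ 2)) :
    (∀ k : ℕ, 1 ≤ k → h (2 * k) = (-1) ^ (k - 1) * (k : ℤ) * 2 ^ (k ^ 2)) ∧
      (∀ k : ℕ, h (2 * k + 1) = (-1) ^ k * 2 ^ (k * (k + 1))) := by
  have key : ∀ n : ℕ, h (2*n+2) = (-1)^n * ((n:ℤ)+1) * 2^((n+1)^2) ∧
      h (2*n+1) = (-1)^n * 2^(n*(n+1)) := by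
    intro n
    induction n using Nat.strong_induction_on with
    | _ n ih =>
      match n with
      | 0 => constructor <;> norm_num [h1, h2]
      | 1 => constructor <;> norm_num [h3, h4]
      | 2 =>
        have h5 : h 5 = 64 := by
          have := hr1 1 le_rfl; norm_num [h1, h3] at this; linarith
        have h6 : h 6 = 1536 := by
          have := hr4 1 le_rfl; norm_num [h1, h2, h3, h4, h5] at this; linarith
        constructor <;> norm_num [h5, h6]
      | (m + 3) =>
        rcases Nat.even_or_odd m with ⟨j, rfl⟩ | ⟨j, rfl⟩
        · -- n = 2j + 3
          have e2 := (ih (j+1) (by omega)).2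
          have e3 := (ih (j+2) (by omega)).2
          have f1 := (ih j (by omega)).1
          have f2 := (ih (j+1) (by omega)).1
          have f3 := (ih (j+2) (by omega)).1
          have ho := hr2 (j+1) (by omega)
          have he := hr3 (j+2) (by omega)
          rw [show 2*(j+1)+3 = 2*(j+2)+1 from by ring] at ho
          rw [e2, e3] at ho
          have f2' : h (2*(j+2)) = (-1)^(j+1) * (((j+1:ℕ):ℤ)+1) * 2^((j+1+1)^2) := by
            rw [show 2*(j+2) = 2*(j+1)+2 from by ring]; exact f2
          rw [show 2*(j+2)-1 = 2*(j+1)+1 from by omega,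
              show 2*(j+2)-2 = 2*j+2 from by omega] at he
          rw [e2, e3, f1, f2', f3] at he
          constructor
          · rw [show 2*(j+j+3)+2 = 4*(j+2) from by ring]
            refine mul_left_cancel₀ (by norm_num : (2:ℤ) ≠ 0) ?_
            rw [he]
            push_cast
            rcases Nat.even_or_odd j with ⟨i, rfl⟩ | ⟨i, rfl⟩ <;>
            · ring_nf
              norm_num [pow_mul']
              try ring
          · rw [show 2*(j+j+3)+1 = 4*(j+1)+3 from by ring, ho]
            rcases Nat.even_or_odd j with ⟨i, rfl⟩ | ⟨i, rfl⟩ <;>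
            · ring_nf
              norm_num [pow_mul']
              try ring
        · -- n = 2j + 4
          have e2 := (ih (j+1) (by omega)).2
          have e3 := (ih (j+2) (by omega)).2
          have e4 := (ih (j+3) (by omega)).2
          have f2 := (ih (j+1) (by omega)).1
          have f3 := (ih (j+2) (by omega)).1
          have ho := hr1 (j+2) (by omega)
          have he := hr4 (j+2) (by omega)
          rw [show 2*(j+2)-1 = 2*(j+1)+1 from by omega] at ho
          rw [show 2*(j+2)+1 = 2*(j+2)+1 from rfl] at ho
          rw [e2, e3] at ho
          have f2' : h (2*(j+2)) = (-1)^(j+1) * (((j+1:ℕ):ℤ)+1) * 2^((j+1+1)^2) := by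
            rw [show 2*(j+2) = 2*(j+1)+2 from by ring]; exact f2
          rw [show 2*(j+2)-1 = 2*(j+1)+1 from by omega,
              show 2*(j+2)+3 = 2*(j+3)+1 from by ring] at he
          rw [e2, e3, e4, f2', f3] at he
          constructor
          · rw [show 2*(2*j+1+3)+2 = 4*(j+2)+2 from by ring]
            refine mul_left_cancel₀ (by norm_num : (2:ℤ) ≠ 0) ?_
            rw [he]
            push_cast
            rcases Nat.even_or_odd j with ⟨i, rfl⟩ | ⟨i, rfl⟩ <;>
            · ring_nf
              norm_num [pow_mul']
              try ring
          · rw [show 2*(2*j+1+3)+1 = 4*(j+2)+1 from by ring, ho]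
            rcases Nat.even_or_odd j with ⟨i, rfl⟩ | ⟨i, rfl⟩ <;>
            · ring_nf
              norm_num [pow_mul']
              try ring
  constructor
  · rintro k hk
    obtain ⟨m, rfl⟩ := Nat.exists_eq_succ_of_ne_zero (by omega : k ≠ 0)
    have := (key m).1
    rw [show 2*(m+1) = 2*m+2 from by ring, this]
    push_cast
    norm_num
  · intro k
    exact (key k).2
end

section
/- Define sequences by j_1 = 1, j_2 = 2, j_3 = −1, j_4 = −4 and the recurrences j_{4k+1} = −j_{2k−1} j_{2k+1}³, j_{4k+3} = j_{2k+3} j_{2k+1}³, j_{4k} = (j_{2k}/2)(j_{2k+2} j_{2k−1}² − j_{2k−2} j_{2k+1}²) for k ≥ 2, and j_{4k+2} = (j_{2k+1}/2)(j_{2k+3} j_{2k}² − j_{2k−1} j_{2k+2}²) for k ≥ 1. Then j_{2k} = (−1)^{k−1} · 2k and j_{2k+1} = (−1)^k for all k. -/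
/-- If `j 1 = 1`, `j 2 = 2`, `j 3 = −1`, `j 4 = −4` and `j` satisfies the recurrences
`j (4k+1) = −j (2k−1) j (2k+1)³`, `j (4k+3) = j (2k+3) j (2k+1)³`,
`j (4k) = (j (2k)/2)(j (2k+2) j (2k−1)² − j (2k−2) j (2k+1)²)` for `k ≥ 2`, and
`j (4k+2) = (j (2k+1)/2)(j (2k+3) j (2k)² − j (2k−1) j (2k+2)²)` for `k ≥ 1`,
then `j (2k) = (−1)^(k−1) · 2k` and `j (2k+1) = (−1)^k` for all `k`. -/
theorem stmt_11 (j : ℕ → ℤ)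
    (j1 : j 1 = 1) (j2 : j 2 = 2) (j3 : j 3 = -1) (j4 : j 4 = -4)
    (hr1 : ∀ k : ℕ, 1 ≤ k → j (4 * k + 1) = -(j (2 * k - 1)) * (j (2 * k + 1)) ^ 3)
    (hr2 : ∀ k : ℕ, 1 ≤ k → j (4 * k + 3) = j (2 * k + 3) * (j (2 * k + 1)) ^ 3)
    (hr3 : ∀ k : ℕ, 2 ≤ k → 2 * j (4 * k) =
      j (2 * k) * (j (2 * k + 2) * (j (2 * k - 1)) ^ 2 - j (2 * k - 2) * (j (2 * k + 1)) ^ 2))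
    (hr4 : ∀ k : ℕ, 1 ≤ k → 2 * j (4 * k + 2) =
      j (2 * k + 1) * (j (2 * k + 3) * (j (2 * k)) ^ 2 - j (2 * k - 1) * (j (2 * k + 2)) ^ 2)) :
    (∀ k : ℕ, 1 ≤ k → j (2 * k) = (-1) ^ (k - 1) * (2 * (k : ℤ))) ∧
      (∀ k : ℕ, j (2 * k + 1) = (-1) ^ k) := by
  have key : ∀ n : ℕ, (1 ≤ n → j (2 * n) = (-1) ^ (n - 1) * (2 * (n : ℤ))) ∧
      j (2 * n + 1) = (-1) ^ n := by
    intro n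
    induction n using Nat.strong_induction_on with
    | _ n ih =>
    match n with
    | 0 => exact ⟨by omega, by simpa using j1⟩
    | 1 =>
      constructor
      · intro _; simpa using j2
      · simpa using j3
    | 2 =>
      constructor
      · intro _; norm_num [j4]
      · have h := hr1 1 le_rfl
        norm_num [j1, j3] at h ⊢
        convert h using 2
    | (m + 3) =>
      rcases Nat.even_or_odd m with hm | hm
      · -- m even, n = 2s+3 odd
        obtain ⟨s, hs⟩ := hm
        obtain rfl : m = 2 * s := by omega
        have hA : j (2 * (s + 1) + 1) = (-1) ^ (s + 1) := (ih (s + 1) (by omega)).2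
        have hB : j (2 * (s + 2) + 1) = (-1) ^ (s + 2) := (ih (s + 2) (by omega)).2
        have hC : j (2 * (s + 1)) = (-1) ^ s * (2 * ((s : ℤ) + 1)) := by
          have h := (ih (s + 1) (by omega)).1 (by omega)
          have e : s + 1 - 1 = s := by omega
          rw [e] at h
          rw [h]; push_cast; ring
        have hD : j (2 * s + 1) = (-1) ^ s := (ih s (by omega)).2
        have hE : j (2 * (s + 2)) = (-1) ^ (s + 1) * (2 * ((s : ℤ) + 2)) := by
          have h := (ih (s + 2) (by omega)).1 (by omega)
          have e : s + 2 - 1 = s + 1 := by omega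
          rw [e] at h
          rw [h]; push_cast; ring
        constructor
        · intro _
          have h4 := hr4 (s + 1) (by omega)
          have e1 : 2 * (s + 1) + 3 = 2 * (s + 2) + 1 := by ring
          have e2 : 2 * (s + 1) - 1 = 2 * s + 1 := by omega
          have e3 : 2 * (s + 1) + 2 = 2 * (s + 2) := by ring
          rw [e1, e2, e3, hA, hB, hC, hD, hE] at h4
          have e4 : 2 * (2 * s + 3) = 4 * (s + 1) + 2 := by ring
          have e5 : 2 * s + 3 - 1 = 2 * s + 2 := by omega
          rw [e4, e5]
          rcases Nat.even_or_odd s with hp | hp <;>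
            simp [pow_succ, pow_add, pow_mul, hp.neg_one_pow] at h4 ⊢ <;>
            push_cast at h4 ⊢ <;> linarith [h4]
        · have h2 := hr2 (s + 1) (by omega)
          have e1 : 2 * (s + 1) + 3 = 2 * (s + 2) + 1 := by ring
          rw [e1, hB, hA] at h2
          have e4 : 2 * (2 * s + 3) + 1 = 4 * (s + 1) + 3 := by ring
          rw [e4]
          rcases Nat.even_or_odd s with hp | hp <;>
            simp [pow_succ, pow_add, pow_mul, hp.neg_one_pow] at h2 ⊢ <;>
            push_cast at h2 ⊢ <;> linarith [h2]
      · -- m odd, n = 2s+4 even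
        obtain ⟨s, hs⟩ := hm
        obtain rfl : m = 2 * s + 1 := by omega
        have hA : j (2 * (s + 2)) = (-1) ^ (s + 1) * (2 * ((s : ℤ) + 2)) := by
          have h := (ih (s + 2) (by omega)).1 (by omega)
          have e : s + 2 - 1 = s + 1 := by omega
          rw [e] at h
          rw [h]; push_cast; ring
        have hB : j (2 * (s + 3)) = (-1) ^ (s + 2) * (2 * ((s : ℤ) + 3)) := by
          have h := (ih (s + 3) (by omega)).1 (by omega)
          have e : s + 3 - 1 = s + 2 := by omega
          rw [e] at h
          rw [h]; push_cast; ring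
        have hC : j (2 * (s + 1)) = (-1) ^ s * (2 * ((s : ℤ) + 1)) := by
          have h := (ih (s + 1) (by omega)).1 (by omega)
          have e : s + 1 - 1 = s := by omega
          rw [e] at h
          rw [h]; push_cast; ring
        have hD : j (2 * (s + 2) + 1) = (-1) ^ (s + 2) := (ih (s + 2) (by omega)).2
        have hE : j (2 * (s + 1) + 1) = (-1) ^ (s + 1) := (ih (s + 1) (by omega)).2
        constructor
        · intro _
          have h3 := hr3 (s + 2) (by omega)
          have e1 : 2 * (s + 2) + 2 = 2 * (s + 3) := by ring
          have e2 : 2 * (s + 2) - 1 = 2 * (s + 1) + 1 := by omega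
          have e3 : 2 * (s + 2) - 2 = 2 * (s + 1) := by omega
          rw [e1, e2, e3, hA, hB, hC, hD, hE] at h3
          have e4 : 2 * (2 * s + 1 + 3) = 4 * (s + 2) := by ring
          have e5 : 2 * s + 1 + 3 - 1 = 2 * s + 3 := by omega
          rw [e4, e5]
          rcases Nat.even_or_odd s with hp | hp <;>
            simp [pow_succ, pow_add, pow_mul, hp.neg_one_pow] at h3 ⊢ <;>
            push_cast at h3 ⊢ <;> linarith [h3]
        · have h1 := hr1 (s + 2) (by omega)
          have e2 : 2 * (s + 2) - 1 = 2 * (s + 1) + 1 := by omega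
          rw [e2, hE, hD] at h1
          have e4 : 2 * (2 * s + 1 + 3) + 1 = 4 * (s + 2) + 1 := by ring
          rw [e4]
          rcases Nat.even_or_odd s with hp | hp <;>
            simp [pow_succ, pow_add, pow_mul, hp.neg_one_pow] at h1 ⊢ <;>
            push_cast at h1 ⊢ <;> linarith [h1]
  exact ⟨fun k hk => (key k).1 hk, fun k => (key k).2⟩
end

section
/- Let Λ = ℤ + ℤi and G_4 = ∑_{ω ∈ Λ \ {0}} ω^{−4}. Then 1 ≤ |15 G_4| ≤ 128. -/
open Complex

noncomputable def F : ℤ × ℤ → ℂ := fun z => 1 / ((z.1 : ℂ) + (z.2 : ℂ) * I) ^ 4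

noncomputable def g1 : ℤ → ℝ := fun n => 1 / ((n : ℝ) ^ 2 + 1)

lemma g1_nonneg (n : ℤ) : 0 ≤ g1 n := by unfold g1; positivity

lemma nat_aux : Summable (fun n : ℕ => 1 / ((n:ℝ) ^ 2 + 1)) := by
  have h1 : Summable (fun n : ℕ => 1 / ((n:ℝ) + 1) ^ 2) := by
    simpa using (summable_nat_add_iff 1).2 (Real.summable_one_div_nat_pow.2 one_lt_two)
  refine Summable.of_nonneg_of_le (fun n => by positivity) (fun n => ?_) (h1.mul_left 2)
  rw [div_le_iff₀ (by positivity)]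
  have : (2 : ℝ) * (1 / ((n:ℝ) + 1) ^ 2) = 2 / ((n:ℝ)+1)^2 := by ring
  rw [this, div_mul_eq_mul_div, le_div_iff₀ (by positivity)]
  nlinarith [sq_nonneg ((n:ℝ) - 1)]

lemma g1_summable : Summable g1 := by
  refine Summable.of_nat_of_neg_add_one (nat_aux.congr (fun n => by simp [g1])) ?_
  refine ((summable_nat_add_iff 1).2 nat_aux).congr (fun n => ?_)
  show 1 / (((n + 1 : ℕ):ℝ)^2+1) = g1 (-((n:ℤ)+1))
  unfold g1
  push_cast
  ring_nf

lemma shift_summable : Summable (fun n : ℕ => 1 / (((n:ℝ) + 1) ^ 2 + 1)) := by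
  refine ((summable_nat_add_iff 1).2 nat_aux).congr (fun n => by push_cast; ring_nf)

lemma S_bound : ∑' n : ℕ, 1 / (((n:ℝ) + 1) ^ 2 + 1) ≤ 110375 / 100000 := by
  have hs3 : Summable (fun n : ℕ => 1 / (((n:ℝ) + 3) ^ 2 + 1)) := by
    refine ((summable_nat_add_iff 3).2 nat_aux).congr (fun n => by push_cast; ring_nf)
  have hzeta : Summable (fun n : ℕ => 1 / ((n:ℝ)) ^ 2) := hasSum_zeta_two.summable
  have hz3 : Summable (fun n : ℕ => 1 / ((n:ℝ) + 3) ^ 2) := by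
    refine ((summable_nat_add_iff 3).2 hzeta).congr (fun n => by push_cast; ring_nf)
  have htail : ∑' n : ℕ, 1 / ((n:ℝ) + 3) ^ 2 = Real.pi ^ 2 / 6 - 5/4 := by
    have h := (Summable.sum_add_tsum_nat_add (f := fun n : ℕ => 1 / ((n:ℝ)) ^ 2) 3 hzeta)
    rw [hasSum_zeta_two.tsum_eq] at h
    have h2 : ∑ i ∈ Finset.range 3, 1 / ((i:ℝ)) ^ 2 = 5/4 := by
      norm_num [Finset.sum_range_succ]
    have h3 : ∑' (i : ℕ), 1 / ((i:ℝ) + 3) ^ 2 = ∑' (i : ℕ), (fun n : ℕ => 1 / ((n:ℝ)) ^ 2) (i + 3) := by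
      refine tsum_congr (fun i => ?_)
      push_cast
      ring_nf
    rw [h3]
    linarith [h, h2]
  have hkey : ∑' n : ℕ, 1 / (((n:ℝ) + 1) ^ 2 + 1)
      = 7/10 + ∑' n : ℕ, 1 / (((n:ℝ) + 3) ^ 2 + 1) := by
    have h := (Summable.sum_add_tsum_nat_add (f := fun n : ℕ => 1 / (((n:ℝ) + 1) ^ 2 + 1)) 2 shift_summable)
    have h2 : ∑ i ∈ Finset.range 2, 1 / (((i:ℝ) + 1) ^ 2 + 1) = 7/10 := by
      norm_num [Finset.sum_range_succ]
    have h3 : ∑' n : ℕ, 1 / (((n:ℝ) + 3) ^ 2 + 1)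
        = ∑' (i : ℕ), (fun n : ℕ => 1 / (((n:ℝ) + 1) ^ 2 + 1)) (i + 2) := by
      refine tsum_congr (fun i => ?_)
      push_cast
      ring_nf
    rw [h3]
    linarith [h, h2]
  have hcmp : ∑' n : ℕ, 1 / (((n:ℝ) + 3) ^ 2 + 1) ≤ ∑' n : ℕ, 1 / ((n:ℝ) + 3) ^ 2 := by
    refine Summable.tsum_le_tsum (fun n => ?_) hs3 hz3
    exact one_div_le_one_div_of_le (by positivity) (by nlinarith)
  have hpi : Real.pi ^ 2 / 6 - 5/4 ≤ 40375/100000 := by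
    have h1 : Real.pi < 3.15 := Real.pi_lt_d2
    have h0 : 0 < Real.pi := Real.pi_pos
    nlinarith
  linarith [hkey, hcmp, htail, hpi]

lemma g1_nat_summable : Summable (fun n : ℕ => g1 n) :=
  nat_aux.congr (fun n => by simp [g1])

lemma g1_neg_summable : Summable (fun n : ℕ => g1 (-((n:ℤ)+1))) :=
  shift_summable.congr (fun n => by unfold g1; push_cast; ring_nf)

lemma t1_bound : ∑' n : ℤ, g1 n ≤ 321/100 := by
  rw [tsum_of_nat_of_neg_add_one g1_nat_summable g1_neg_summable]
  have h1 : ∑' n : ℕ, g1 n = 1 + ∑' n : ℕ, 1 / (((n:ℝ) + 1) ^ 2 + 1) := by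
    have h := (Summable.sum_add_tsum_nat_add (f := fun n : ℕ => g1 n) 1 g1_nat_summable)
    have h0 : ∑ i ∈ Finset.range 1, g1 i = 1 := by simp [g1]
    have h3 : ∑' n : ℕ, 1 / (((n:ℝ) + 1) ^ 2 + 1) = ∑' (i : ℕ), (fun n : ℕ => g1 n) (i + 1) := by
      refine tsum_congr (fun i => ?_)
      unfold g1; push_cast; ring_nf
    rw [h3]
    linarith [h, h0]
  have h2 : ∑' n : ℕ, g1 (-((n:ℤ)+1)) = ∑' n : ℕ, 1 / (((n:ℝ) + 1) ^ 2 + 1) := by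
    refine tsum_congr (fun i => ?_)
    unfold g1; push_cast; ring_nf
  rw [h1, h2]
  linarith [S_bound]

lemma g_summable : Summable (fun z : ℤ × ℤ => g1 z.1 * g1 z.2) :=
  g1_summable.mul_of_nonneg g1_summable (fun n => g1_nonneg n) (fun n => g1_nonneg n)

lemma g_tsum_le : ∑' z : ℤ × ℤ, g1 z.1 * g1 z.2 ≤ (321/100)^2 := by
  have hn : Summable (fun n : ℤ => ‖g1 n‖) :=
    g1_summable.congr (fun n => (Real.norm_of_nonneg (g1_nonneg n)).symm)
  have h := tsum_mul_tsum_of_summable_norm (f := g1) (g := g1) hn hn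
  rw [← h]
  have h0 : 0 ≤ ∑' n : ℤ, g1 n := tsum_nonneg (fun n => g1_nonneg n)
  nlinarith [t1_bound]

lemma normF (z : ℤ × ℤ) : ‖F z‖ = 1 / ((z.1:ℝ)^2 + (z.2:ℝ)^2)^2 := by
  unfold F
  rw [norm_div, norm_one, norm_pow]
  congr 1
  have h : ((z.1:ℂ) + (z.2:ℂ) * I) = ((z.1:ℝ):ℂ) + ((z.2:ℝ):ℂ) * I := by push_cast; ring
  rw [h, show (4:ℕ) = 2*2 from rfl, pow_mul, Complex.sq_norm,
    Complex.normSq_add_mul_I]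

lemma quad (x y : ℝ) (hx4 : 4 ≤ x) (hy0 : 0 ≤ y) (hy : y ≤ 1 ∨ 4 ≤ y) :
    5 * ((x+1) * (y+1)) ≤ 2 * ((x+y)^2) := by
  rcases hy with hy | hy
  · nlinarith [mul_nonneg (by linarith : (0:ℝ) ≤ x-4) (by linarith : (0:ℝ) ≤ x+1),
      mul_nonneg (by linarith : (0:ℝ) ≤ 1-y) (by linarith : (0:ℝ) ≤ x+3-2*y)]
  · nlinarith [sq_nonneg (x-y)]

lemma int_sq (n : ℤ) : ((n:ℝ)^2 ≤ 1 ∨ 4 ≤ (n:ℝ)^2) := by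
  have : n^2 ≤ 1 ∨ 4 ≤ n^2 := by
    rcases le_or_gt (-1) n with h1 | h1 <;> rcases le_or_gt n 1 with h2 | h2
    · left; nlinarith
    · right; nlinarith
    · right; nlinarith
    · right; nlinarith
  rcases this with h | h
  · left; exact_mod_cast h
  · right; exact_mod_cast h

noncomputable def B : Finset (ℤ × ℤ) := (Finset.Icc (-1:ℤ) 1) ×ˢ (Finset.Icc (-1:ℤ) 1)

lemma not_mem_B {z : ℤ × ℤ} (hz : z ∉ B) : 4 ≤ (z.1:ℝ)^2 ∨ 4 ≤ (z.2:ℝ)^2 := by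
  unfold B at hz
  rw [Finset.mem_product, Finset.mem_Icc, Finset.mem_Icc] at hz
  have : 4 ≤ z.1^2 ∨ 4 ≤ z.2^2 := by
    by_contra h
    push_neg at h
    apply hz
    constructor <;> constructor <;> nlinarith [h.1, h.2]
  rcases this with h | h
  · left; exact_mod_cast h
  · right; exact_mod_cast h

lemma tail_ptwise (z : ℤ × ℤ) (hz : z ∉ B) : ‖F z‖ ≤ 2/5 * (g1 z.1 * g1 z.2) := by
  rw [normF]
  unfold g1
  set a : ℝ := (z.1:ℝ) with ha
  set b : ℝ := (z.2:ℝ) with hb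
  have ha0 : (0:ℝ) ≤ a^2 := sq_nonneg a
  have hb0 : (0:ℝ) ≤ b^2 := sq_nonneg b
  have main : 5 * ((a^2+1) * (b^2+1)) ≤ 2 * ((a^2+b^2)^2) := by
    rcases not_mem_B hz with h | h
    · exact quad _ _ h hb0 (int_sq z.2)
    · have := quad _ _ h ha0 (int_sq z.1)
      nlinarith [this]
  have h1 : (0:ℝ) < (a^2+b^2)^2 := by rcases not_mem_B hz with h | h <;> nlinarith
  have h2 : (0:ℝ) < 5*((a^2+1)*(b^2+1)) := by positivity
  have hrw : (2:ℝ)/5 * (1/(a^2+1) * (1/(b^2+1))) = 2 / (5*((a^2+1)*(b^2+1))) := by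
    field_simp
  rw [hrw, div_le_div_iff₀ h1 h2]
  nlinarith [main]

lemma F_norm_summable : Summable (fun z : ℤ × ℤ => ‖F z‖) := by
  rw [← Finset.summable_compl_iff B]
  refine Summable.of_nonneg_of_le (fun z => norm_nonneg _)
    (fun z => tail_ptwise z z.2) ?_
  exact ((g_summable.mul_left (2/5)).subtype _)

lemma F_summable : Summable F := F_norm_summable.of_norm

lemma box_g : ∑ z ∈ B, g1 z.1 * g1 z.2 = 4 := by
  unfold B
  rw [show (Finset.Icc (-1:ℤ) 1) = {-1,0,1} by decide]
  rw [Finset.sum_product]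
  norm_num [g1]

lemma tail_bound : ∑' z : ↑(↑B : Set (ℤ × ℤ))ᶜ, ‖F z‖ ≤ 2/5 * ((321/100)^2 - 4) := by
  have hgc : Summable (fun z : ↑(↑B : Set (ℤ × ℤ))ᶜ => g1 (z:ℤ×ℤ).1 * g1 (z:ℤ×ℤ).2) :=
    g_summable.subtype _
  have hcompl := Summable.sum_add_tsum_compl (s := B) (f := fun z : ℤ × ℤ => g1 z.1 * g1 z.2) g_summable
  have hFc : Summable (fun z : ↑(↑B : Set (ℤ × ℤ))ᶜ => ‖F (z:ℤ×ℤ)‖) :=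
    F_norm_summable.subtype _
  have h1 : ∑' z : ↑(↑B : Set (ℤ × ℤ))ᶜ, ‖F z‖
      ≤ ∑' z : ↑(↑B : Set (ℤ × ℤ))ᶜ, 2/5 * (g1 (z:ℤ×ℤ).1 * g1 (z:ℤ×ℤ).2) := by
    refine Summable.tsum_le_tsum (fun z => tail_ptwise z ?_) hFc (hgc.mul_left _)
    exact z.2
  have h2 : ∑' z : ↑(↑B : Set (ℤ × ℤ))ᶜ, 2/5 * (g1 (z:ℤ×ℤ).1 * g1 (z:ℤ×ℤ).2)
      = 2/5 * ∑' z : ↑(↑B : Set (ℤ × ℤ))ᶜ, (g1 (z:ℤ×ℤ).1 * g1 (z:ℤ×ℤ).2) := tsum_mul_left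
  have h3 : ∑' z : ↑(↑B : Set (ℤ × ℤ))ᶜ, (g1 (z:ℤ×ℤ).1 * g1 (z:ℤ×ℤ).2) ≤ (321/100)^2 - 4 := by
    rw [box_g] at hcompl
    linarith [g_tsum_le, hcompl]
  rw [h2] at h1
  nlinarith [h1, h3]

lemma box_sum : ∑ z ∈ B, F z = 3 := by
  have h : (I:ℂ)^2 = -1 := Complex.I_sq
  have h1 : ((-1:ℂ) + -I)^4 = -4 := by linear_combination (6 + 4*I + I^2 - 1) * h
  have h2 : ((-1:ℂ) + I)^4 = -4 := by linear_combination (6 - 4*I + I^2 - 1) * h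
  have h3 : ((1:ℂ) + -I)^4 = -4 := by linear_combination (6 - 4*I + I^2 - 1) * h
  have h4 : ((1:ℂ) + I)^4 = -4 := by linear_combination (6 + 4*I + I^2 - 1) * h
  have h5 : ((-I:ℂ))^4 = 1 := by linear_combination (I^2 - 1) * h
  unfold B
  rw [show (Finset.Icc (-1:ℤ) 1) = {-1,0,1} by decide]
  rw [Finset.sum_product]
  simp only [Finset.sum_insert, Finset.mem_insert, Finset.sum_singleton, F]
  norm_num [h1, h2, h3, h4, h5]

/-- Let `Λ = ℤ + ℤi` and `G₄ = ∑_{ω ∈ Λ \ {0}} ω⁻⁴`. Then `1 ≤ |15 G₄| ≤ 128`. -/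
theorem stmt_15 (G4 : ℂ)
    (hG4 : G4 = ∑' ω : {z : ℤ × ℤ // z ≠ 0},
      1 / (((ω : ℤ × ℤ).1 : ℂ) + ((ω : ℤ × ℤ).2 : ℂ) * Complex.I) ^ 4) :
    1 ≤ ‖15 * G4‖ ∧ ‖15 * G4‖ ≤ 128 := by
  have hsupp : Function.support F ⊆ {z : ℤ × ℤ | z ≠ 0} := by
    intro z hz
    simp only [Set.mem_setOf_eq]
    rintro rfl
    apply hz
    show F (0, 0) = 0
    simp [F]
  have hG4' : G4 = ∑' z : ℤ × ℤ, F z := by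
    rw [hG4]
    exact tsum_subtype_eq_of_support_subset (s := {z : ℤ × ℤ | z ≠ 0}) hsupp
  have hsplit := Summable.sum_add_tsum_compl (s := B) (f := F) F_summable
  rw [box_sum] at hsplit
  set T : ℂ := ∑' z : ↑(↑B : Set (ℤ × ℤ))ᶜ, F z with hT
  have hTn : ‖T‖ ≤ 2/5 * ((321/100)^2 - 4) := by
    refine le_trans (norm_tsum_le_tsum_norm (F_norm_summable.subtype _)) tail_bound
  have hG3 : G4 = 3 + T := by rw [hG4', ← hsplit]
  have hub : ‖G4‖ ≤ 3 + 2/5 * ((321/100)^2 - 4) := by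
    rw [hG3]
    calc ‖(3:ℂ) + T‖ ≤ ‖(3:ℂ)‖ + ‖T‖ := norm_add_le _ _
    _ ≤ 3 + 2/5 * ((321/100)^2 - 4) := by
        rw [show ‖(3:ℂ)‖ = 3 by simp]
        linarith [hTn]
  have hlb : 3 - 2/5 * ((321/100)^2 - 4) ≤ ‖G4‖ := by
    rw [hG3]
    have h := norm_add_le (3 + T) (-T)
    simp only [add_neg_cancel_right, norm_neg] at h
    rw [show ‖(3:ℂ)‖ = 3 by simp] at h
    linarith [hTn]
  have habs : ‖15 * G4‖ = 15 * ‖G4‖ := by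
    rw [norm_mul]
    norm_num
  rw [habs]
  constructor <;> nlinarith [hub, hlb]
end

section
/- Let n ≥ 2 and let T₁, T₂ be nontrivial n-torsion points of E_a(ℚ̄), where E_a: y² = x³ + ax with a a nonzero integer, such that T₁ ≠ ±T₂. Then |x(T₁) − x(T₂)| = |a|^{1/2} · |x(S₁) − x(S₂)| for some pair of nontrivial n-torsion points S₁ ≠ ±S₂ of E_1: y² = x³ + x; consequently |x(T₁) − x(T₂)| ≥ K_n |a|^{−1/2} where K_n = min over pairs S₁ ≠ ±S₂ of nontrivial n-torsion points of E_1 of min(|x(S₁)−x(S₂)|, |x(S₁)^{−1}−x(S₂)^{−1}|). -/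
open WeierstrassCurve WeierstrassCurve.Affine

/-- The curve `E₁ : y² = x³ + x` over `ℂ`. -/
noncomputable def W1 : WeierstrassCurve.Affine ℂ :=
  { a₁ := 0, a₂ := 0, a₃ := 0, a₄ := 1, a₆ := 0 }

/-- The constant `Kₙ`: the infimum over pairs `S₁ ≠ ±S₂` of nontrivial `n`-torsion points
of `E₁ : y² = x³ + x` of the quantities `|x(S₁) − x(S₂)|` and (when the `x`-coordinates are
nonzero) `|x(S₁)⁻¹ − x(S₂)⁻¹|`. -/
noncomputable def Kconst (n : ℕ) : ℝ :=
  sInf {r : ℝ | ∃ (x₁ y₁ x₂ y₂ : ℂ) (h₁ : W1.Nonsingular x₁ y₁) (h₂ : W1.Nonsingular x₂ y₂),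
    n • (Point.some _ _ h₁ : W1.Point) = 0 ∧ n • (Point.some _ _ h₂ : W1.Point) = 0 ∧
    (Point.some _ _ h₁ : W1.Point) ≠ Point.some _ _ h₂ ∧
    (Point.some _ _ h₁ : W1.Point) ≠ -Point.some _ _ h₂ ∧
    (r = ‖x₁ - x₂‖ ∨
      (x₁ ≠ 0 ∧ x₂ ≠ 0 ∧ r = ‖x₁⁻¹ - x₂⁻¹‖))}

noncomputable def curveC (A : ℂ) : WeierstrassCurve.Affine ℂ :=
  { a₁ := 0, a₂ := 0, a₃ := 0, a₄ := A, a₆ := 0 }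

lemma negY_curveC (A x y : ℂ) : (curveC A).negY x y = -y := by
  simp [negY, curveC]

lemma negY_W1 (x y : ℂ) : W1.negY x y = -y := by
  simp [negY, W1]

lemma ns_map {A u : ℂ} (hu : u ≠ 0) (hA : A = u ^ 4) {x y : ℂ}
    (h : (curveC A).Nonsingular x y) : W1.Nonsingular (x / u ^ 2) (y / u ^ 3) := by
  rw [nonsingular_iff, equation_iff] at h ⊢
  simp only [curveC, W1, negY] at h ⊢
  obtain ⟨he, hs⟩ := h
  subst hA
  constructor
  · field_simp
    linear_combination he
  · rcases hs with hs | hs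
    · left
      intro hc
      apply hs
      field_simp at hc ⊢
      linear_combination hc
    · right
      intro hc
      apply hs
      field_simp at hc ⊢
      linear_combination hc

lemma slope_map {A u : ℂ} (hu : u ≠ 0) (hA : A = u ^ 4) (x₁ x₂ y₁ y₂ : ℂ) :
    W1.slope (x₁ / u ^ 2) (x₂ / u ^ 2) (y₁ / u ^ 3) (y₂ / u ^ 3) =
      (curveC A).slope x₁ x₂ y₁ y₂ / u := by
  have hinj2 : ∀ s t : ℂ, s / u ^ 2 = t / u ^ 2 → s = t := fun s t h => by
    field_simp at h; exact h
  have hinj3 : ∀ s t : ℂ, s / u ^ 3 = t / u ^ 3 → s = t := fun s t h => by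
    field_simp at h; exact h
  by_cases hx : x₁ = x₂
  · by_cases hy : y₁ = (curveC A).negY x₂ y₂
    · rw [negY_curveC] at hy
      have hy' : y₁ / u ^ 3 = W1.negY (x₂ / u ^ 2) (y₂ / u ^ 3) := by
        rw [negY_W1, hy, neg_div]
      rw [slope_of_Y_eq (by rw [hx]) hy', slope_of_Y_eq hx (by rw [negY_curveC]; exact hy),
        zero_div]
    · rw [negY_curveC] at hy
      have hy' : y₁ / u ^ 3 ≠ W1.negY (x₂ / u ^ 2) (y₂ / u ^ 3) := by
        rw [negY_W1, ← neg_div]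
        exact fun hc => hy (hinj3 _ _ hc)
      rw [slope_of_Y_ne (by rw [hx]) hy', slope_of_Y_ne hx (by rw [negY_curveC]; exact hy)]
      simp only [negY_W1, negY_curveC, curveC, W1]
      by_cases hy0 : y₁ = 0
      · simp [hy0]
      · subst hA
        simp only [negY]
        field_simp
        ring_nf
        try field_simp
        try ring
  · rw [slope_of_X_ne (fun hc => hx (hinj2 _ _ hc)), slope_of_X_ne hx]
    rw [div_sub_div_same, div_sub_div_same, div_div_div_eq]
    have h1 : u ^ 3 * x₁ - u ^ 3 * x₂ ≠ 0 := by
      rw [← mul_sub]; exact mul_ne_zero (pow_ne_zero 3 hu) (sub_ne_zero.mpr hx)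
    have h2 : u * x₁ - u * x₂ ≠ 0 := by
      rw [← mul_sub]; exact mul_ne_zero hu (sub_ne_zero.mpr hx)
    field_simp
    try field_simp
    try ring

lemma addX_map {A u : ℂ} (hu : u ≠ 0) (x₁ x₂ L : ℂ) :
    W1.addX (x₁ / u ^ 2) (x₂ / u ^ 2) (L / u) = (curveC A).addX x₁ x₂ L / u ^ 2 := by
  simp only [addX, curveC, W1]
  try field_simp
  try ring_nf
  try field_simp
  try ring

lemma addY_map {A u : ℂ} (hu : u ≠ 0) (x₁ x₂ y₁ L : ℂ) :
    W1.addY (x₁ / u ^ 2) (x₂ / u ^ 2) (y₁ / u ^ 3) (L / u) =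
      (curveC A).addY x₁ x₂ y₁ L / u ^ 3 := by
  simp only [addY, negAddY, addX, negY, curveC, W1]
  try field_simp
  try ring_nf
  try field_simp
  try ring

lemma some_congr {W : WeierstrassCurve.Affine ℂ} {x y x' y' : ℂ}
    (hx : x = x') (hy : y = y') (h : W.Nonsingular x y) (h' : W.Nonsingular x' y') :
    Point.some _ _ h = Point.some _ _ h' := by
  subst hx; subst hy; rfl

noncomputable def ptMap {A u : ℂ} (hu : u ≠ 0) (hA : A = u ^ 4) :
    (curveC A).Point → W1.Point
  | .zero => 0
  | .some _ _ h => .some _ _ (ns_map hu hA h)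

lemma ptMap_zero {A u : ℂ} (hu : u ≠ 0) (hA : A = u ^ 4) :
    ptMap hu hA 0 = 0 := rfl

lemma ptMap_some {A u : ℂ} (hu : u ≠ 0) (hA : A = u ^ 4) {x y : ℂ}
    (h : (curveC A).Nonsingular x y) :
    ptMap hu hA (.some _ _ h) = .some _ _ (ns_map hu hA h) := rfl

lemma ptMap_add {A u : ℂ} (hu : u ≠ 0) (hA : A = u ^ 4) (P Q : (curveC A).Point) :
    ptMap hu hA (P + Q) = ptMap hu hA P + ptMap hu hA Q := by
  have hinj2 : ∀ s t : ℂ, s / u ^ 2 = t / u ^ 2 → s = t := fun s t h => by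
    field_simp at h; exact h
  rcases P with _ | @⟨p₁, q₁, hp₁⟩
  · rw [← Point.zero_def, zero_add, ptMap_zero, zero_add]
  rcases Q with _ | @⟨p₂, q₂, hp₂⟩
  · rw [← Point.zero_def, add_zero, ptMap_zero, add_zero]
  rw [ptMap_some, ptMap_some]
  by_cases hxy : p₁ = p₂ ∧ q₁ = (curveC A).negY p₂ q₂
  · rw [Point.add_of_Y_eq hxy.1 hxy.2, ptMap_zero]
    rw [Point.add_of_Y_eq (by rw [hxy.1]) (by
      rw [negY_W1]; rw [negY_curveC] at hxy
      rw [hxy.2, neg_div])]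
  · push_neg at hxy
    have hxy' : p₁ / u ^ 2 = p₂ / u ^ 2 → q₁ / u ^ 3 ≠ W1.negY (p₂ / u ^ 2) (q₂ / u ^ 3) := by
      intro hp hq
      rw [negY_W1, ← neg_div] at hq
      exact hxy (hinj2 _ _ hp) (by rw [negY_curveC]; field_simp at hq; linear_combination hq)
    rw [Point.add_some (fun h => hxy h.1 h.2), Point.add_some (fun h => hxy' h.1 h.2), ptMap_some]
    exact some_congr (by rw [slope_map hu hA, addX_map hu]) (by rw [slope_map hu hA, addY_map hu]) _ _

noncomputable def ptHom {A u : ℂ} (hu : u ≠ 0) (hA : A = u ^ 4) :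
    (curveC A).Point →+ W1.Point where
  toFun := ptMap hu hA
  map_zero' := rfl
  map_add' := ptMap_add hu hA

lemma ptHom_some {A u : ℂ} (hu : u ≠ 0) (hA : A = u ^ 4) {x y : ℂ}
    (h : (curveC A).Nonsingular x y) :
    ptHom hu hA (.some _ _ h) = .some _ _ (ns_map hu hA h) := rfl


/-- Let `n ≥ 2` and let `T₁ ≠ ±T₂` be nontrivial `n`-torsion points of
`E_a : y² = x³ + a x` over `ℂ` (`a` a nonzero integer). Then
`|x(T₁) − x(T₂)| = |a|^{1/2} |x(S₁) − x(S₂)|` for some pair of nontrivial `n`-torsion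
points `S₁ ≠ ±S₂` of `E₁ : y² = x³ + x`; consequently
`|x(T₁) − x(T₂)| ≥ Kₙ |a|^{−1/2}`. -/
theorem stmt_16 (a : ℤ) (ha : a ≠ 0)
    (Wa : WeierstrassCurve.Affine ℂ)
    (hWa : Wa = { a₁ := 0, a₂ := 0, a₃ := 0, a₄ := (a : ℂ), a₆ := 0 })
    (n : ℕ) (hn : 2 ≤ n)
    (x₁ y₁ x₂ y₂ : ℂ) (h₁ : Wa.Nonsingular x₁ y₁) (h₂ : Wa.Nonsingular x₂ y₂)
    (hT₁ : n • (Point.some _ _ h₁ : Wa.Point) = 0)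
    (hT₂ : n • (Point.some _ _ h₂ : Wa.Point) = 0)
    (hne : (Point.some _ _ h₁ : Wa.Point) ≠ Point.some _ _ h₂)
    (hne' : (Point.some _ _ h₁ : Wa.Point) ≠ -Point.some _ _ h₂) :
    (∃ (x₁' y₁' x₂' y₂' : ℂ) (h₁' : W1.Nonsingular x₁' y₁') (h₂' : W1.Nonsingular x₂' y₂'),
      n • (Point.some _ _ h₁' : W1.Point) = 0 ∧ n • (Point.some _ _ h₂' : W1.Point) = 0 ∧
      (Point.some _ _ h₁' : W1.Point) ≠ Point.some _ _ h₂' ∧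
      (Point.some _ _ h₁' : W1.Point) ≠ -Point.some _ _ h₂' ∧
      ‖x₁ - x₂‖ = Real.sqrt |(a : ℝ)| * ‖x₁' - x₂'‖) ∧
    Kconst n * (Real.sqrt |(a : ℝ)|)⁻¹ ≤ ‖x₁ - x₂‖ := by
  have hWa' : Wa = curveC (a : ℂ) := by rw [hWa]; rfl
  clear hWa
  subst hWa'
  obtain ⟨u, hu4⟩ := IsAlgClosed.exists_pow_nat_eq ((a : ℂ)) (n := 4) (by norm_num)
  have huz : u ≠ 0 := by
    intro h
    apply ha
    have h0 : ((a : ℤ) : ℂ) = 0 := by rw [← hu4, h]; ring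
    exact_mod_cast h0
  have hA : (a : ℂ) = u ^ 4 := hu4.symm
  have h₁' : W1.Nonsingular (x₁ / u ^ 2) (y₁ / u ^ 3) := ns_map huz hA h₁
  have h₂' : W1.Nonsingular (x₂ / u ^ 2) (y₂ / u ^ 3) := ns_map huz hA h₂
  set σ := ptHom huz hA with hσ
  have hS₁ : n • (Point.some _ _ h₁' : W1.Point) = 0 := by
    rw [← ptHom_some huz hA h₁, ← map_nsmul σ, hT₁, map_zero]
  have hS₂ : n • (Point.some _ _ h₂' : W1.Point) = 0 := by
    rw [← ptHom_some huz hA h₂, ← map_nsmul σ, hT₂, map_zero]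
  have hS_ne : (Point.some _ _ h₁' : W1.Point) ≠ Point.some _ _ h₂' := by
    intro hc
    apply hne
    injection hc with hx hy
    refine some_congr ?_ ?_ h₁ h₂
    · field_simp at hx; exact hx
    · field_simp at hy; exact hy
  have hS_ne' : (Point.some _ _ h₁' : W1.Point) ≠ -Point.some _ _ h₂' := by
    intro hc
    apply hne'
    rw [Point.neg_some] at hc ⊢
    injection hc with hx hy
    rw [negY_W1] at hy
    refine some_congr ?_ ?_ h₁ _
    · field_simp at hx; exact hx
    · rw [negY_curveC]
      field_simp at hy; linear_combination hy
  have ha' : (0 : ℝ) < |(a : ℝ)| := abs_pos.mpr (by exact_mod_cast ha)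
  have h2 : ‖u ^ 2‖ ^ 2 = |(a : ℝ)| := by
    rw [← norm_pow, show (u ^ 2) ^ 2 = ((a : ℂ)) by rw [hA]; ring]
    rw [show ((a : ℤ) : ℂ) = (((a : ℝ) : ℂ)) by push_cast; ring, Complex.norm_real, Real.norm_eq_abs]
  have habs : ‖u ^ 2‖ = Real.sqrt |(a : ℝ)| := by
    rw [← h2, Real.sqrt_sq (norm_nonneg _)]
  have hs0 : Real.sqrt |(a : ℝ)| ≠ 0 := ne_of_gt (Real.sqrt_pos.mpr ha')
  have heq : ‖x₁ - x₂‖ =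
      Real.sqrt |(a : ℝ)| * ‖x₁ / u ^ 2 - x₂ / u ^ 2‖ := by
    rw [show x₁ / u ^ 2 - x₂ / u ^ 2 = (x₁ - x₂) / u ^ 2 by ring, norm_div, habs,
      mul_comm, div_mul_cancel₀ _ hs0]
  refine ⟨⟨x₁ / u ^ 2, y₁ / u ^ 3, x₂ / u ^ 2, y₂ / u ^ 3, h₁', h₂', hS₁, hS₂, hS_ne, hS_ne',
    heq⟩, ?_⟩
  have hbdd : BddBelow {r : ℝ | ∃ (x₁ y₁ x₂ y₂ : ℂ) (h₁ : W1.Nonsingular x₁ y₁)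
      (h₂ : W1.Nonsingular x₂ y₂),
      n • (Point.some _ _ h₁ : W1.Point) = 0 ∧ n • (Point.some _ _ h₂ : W1.Point) = 0 ∧
      (Point.some _ _ h₁ : W1.Point) ≠ Point.some _ _ h₂ ∧
      (Point.some _ _ h₁ : W1.Point) ≠ -Point.some _ _ h₂ ∧
      (r = ‖x₁ - x₂‖ ∨
        (x₁ ≠ 0 ∧ x₂ ≠ 0 ∧ r = ‖x₁⁻¹ - x₂⁻¹‖))} := by
    refine ⟨0, ?_⟩
    rintro r ⟨_, _, _, _, _, _, _, _, _, _, rfl | ⟨-, -, rfl⟩⟩ <;> exact norm_nonneg _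
  have hmem : ‖x₁ / u ^ 2 - x₂ / u ^ 2‖ ∈ {r : ℝ | ∃ (x₁ y₁ x₂ y₂ : ℂ)
      (h₁ : W1.Nonsingular x₁ y₁) (h₂ : W1.Nonsingular x₂ y₂),
      n • (Point.some _ _ h₁ : W1.Point) = 0 ∧ n • (Point.some _ _ h₂ : W1.Point) = 0 ∧
      (Point.some _ _ h₁ : W1.Point) ≠ Point.some _ _ h₂ ∧
      (Point.some _ _ h₁ : W1.Point) ≠ -Point.some _ _ h₂ ∧
      (r = ‖x₁ - x₂‖ ∨
        (x₁ ≠ 0 ∧ x₂ ≠ 0 ∧ r = ‖x₁⁻¹ - x₂⁻¹‖))} :=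
    ⟨x₁ / u ^ 2, y₁ / u ^ 3, x₂ / u ^ 2, y₂ / u ^ 3, h₁', h₂', hS₁, hS₂, hS_ne, hS_ne',
      Or.inl rfl⟩
  have hK : Kconst n ≤ ‖x₁ / u ^ 2 - x₂ / u ^ 2‖ := csInf_le hbdd hmem
  have hK0 : 0 ≤ Kconst n := by
    refine Real.sInf_nonneg ?_
    rintro r ⟨_, _, _, _, _, _, _, _, _, _, rfl | ⟨-, -, rfl⟩⟩ <;> exact norm_nonneg _
  have h1le : (1 : ℝ) ≤ Real.sqrt |(a : ℝ)| := by
    rw [show (1 : ℝ) = Real.sqrt 1 by simp]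
    exact Real.sqrt_le_sqrt (by exact_mod_cast Int.one_le_abs ha)
  calc Kconst n * (Real.sqrt |(a : ℝ)|)⁻¹
      ≤ Kconst n * Real.sqrt |(a : ℝ)| := by
        refine mul_le_mul_of_nonneg_left ?_ hK0
        calc (Real.sqrt |(a : ℝ)|)⁻¹ ≤ 1 := by
              rw [inv_le_one_iff₀]
              right; exact h1le
          _ ≤ Real.sqrt |(a : ℝ)| := h1le
    _ ≤ ‖x₁ / u ^ 2 - x₂ / u ^ 2‖ * Real.sqrt |(a : ℝ)| :=
        mul_le_mul_of_nonneg_right hK (Real.sqrt_nonneg _)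
    _ = ‖x₁ - x₂‖ := by rw [heq]; ring
end

section
/- Let p ≥ 13 be a prime and n a positive integer whose smallest prime divisor is p. Then (2p−2)/p² − ∑_{q | n prime} 1/q² ≥ 0.8/p. -/
/-- Let `p ≥ 13` be a prime and `n` a positive integer whose smallest prime divisor is `p`.
Then `(2p−2)/p² − ∑_{q ∣ n prime} 1/q² ≥ 0.8/p`. -/
theorem stmt_17 (p n : ℕ) (hp : p.Prime) (hp13 : 13 ≤ p) (hn : 0 < n)
    (hpn : p ∣ n) (hmin : ∀ q : ℕ, q.Prime → q ∣ n → p ≤ q) :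
    (0.8 : ℝ) / p ≤ (2 * (p : ℝ) - 2) / (p : ℝ) ^ 2 -
      ∑ q ∈ n.primeFactors, (1 : ℝ) / (q : ℝ) ^ 2 := by
  have hP : (13 : ℝ) ≤ (p : ℝ) := by exact_mod_cast hp13
  have hpS : p ∈ n.primeFactors := Nat.mem_primeFactors.mpr ⟨hp, hpn, hn.ne'⟩
  have key : ∑ q ∈ n.primeFactors, (1 : ℝ) / (q : ℝ) ^ 2
      ≤ 1 / (p : ℝ) ^ 2 + 1 / ((p : ℝ) + 1) := by
    rw [← Finset.add_sum_erase _ _ hpS]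
    have hsub : n.primeFactors.erase p ⊆ Finset.Ioc (p + 1) (n + p + 1) := by
      intro q hq
      obtain ⟨hqne, hqS⟩ := Finset.mem_erase.mp hq
      obtain ⟨hq_prime, hqdvd, -⟩ := Nat.mem_primeFactors.mp hqS
      have h1 : p ≤ q := hmin q hq_prime hqdvd
      have h2 : q ≤ n := Nat.le_of_dvd hn hqdvd
      have hq_odd : Odd q := hq_prime.odd_of_ne_two (by omega)
      have hp_odd : Odd p := hp.odd_of_ne_two (by omega)
      obtain ⟨a, ha⟩ := hq_odd
      obtain ⟨b, hb⟩ := hp_odd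
      exact Finset.mem_Ioc.mpr ⟨by omega, by omega⟩
    have hbound : ∑ q ∈ n.primeFactors.erase p, (1 : ℝ) / (q : ℝ) ^ 2
        ≤ 1 / ((p : ℝ) + 1) := by
      calc ∑ q ∈ n.primeFactors.erase p, (1 : ℝ) / (q : ℝ) ^ 2
          ≤ ∑ q ∈ Finset.Ioc (p + 1) (n + p + 1), (1 : ℝ) / (q : ℝ) ^ 2 :=
            Finset.sum_le_sum_of_subset_of_nonneg hsub (by intros; positivity)
        _ ≤ ((p + 1 : ℕ) : ℝ)⁻¹ - ((n + p + 1 : ℕ) : ℝ)⁻¹ := by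
            simpa [one_div] using
              sum_Ioc_inv_sq_le_sub (α := ℝ) (k := p + 1) (n := n + p + 1)
                (by omega) (by omega)
        _ ≤ 1 / ((p : ℝ) + 1) := by
            rw [one_div]
            push_cast
            have : (0 : ℝ) ≤ ((n : ℝ) + p + 1)⁻¹ := by positivity
            linarith
    linarith
  have harith : (0.8 : ℝ) / p ≤ (2 * (p : ℝ) - 2) / (p : ℝ) ^ 2 -
      (1 / (p : ℝ) ^ 2 + 1 / ((p : ℝ) + 1)) := by
    rw [div_add_div _ _ (by positivity) (by positivity), div_sub_div _ _ (by positivity) (by positivity),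
      div_le_div_iff₀ (by positivity) (by positivity)]
    have h1 : (0 : ℝ) ≤ 0.2 * (p : ℝ) ^ 2 - 1.8 * (p : ℝ) - 3 := by nlinarith
    have h2 : (0 : ℝ) < (p : ℝ) := by linarith
    nlinarith [mul_nonneg (mul_nonneg (mul_nonneg h1 h2.le) h2.le) h2.le]
  linarith
end

section
/- Let f, g ∈ ℤ[x] be coprime polynomials with ψ² = f·g, and suppose every two distinct roots x₀ ≠ x₁ of ψ² satisfy |x₀ − x₁| ≥ ε and (when nonzero) |x₀^{−1} − x₁^{−1}| ≥ ε, for some ε with 0 < ε ≤ 2. Let u, v be coprime integers with v ≥ 1, max(|u|, v) ≥ (ε/2)^{−1}, and ψ²(u,v) ≠ 0, where F(u,v) denotes the homogenization of a polynomial F evaluated at (u,v). Then |ψ²(u,v)| ≥ max(|u|, v)^d · (ε/2)^d, where d = min(deg f, deg g). -/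
open Polynomial

/-- The homogenization of a polynomial `F ∈ ℤ[x]` (with respect to its degree),
evaluated at `(u, v)`: this is `v ^ deg F * F(u/v)`. -/
def homEval (F : Polynomial ℤ) (u v : ℤ) : ℤ :=
  ∑ i ∈ Finset.range (F.natDegree + 1), F.coeff i * u ^ i * v ^ (F.natDegree - i)

lemma intCastC_inj : Function.Injective (Int.castRingHom ℂ) := fun a b h => by
  simpa using h

lemma homEval_cast (F : Polynomial ℤ) (u v : ℤ) (hv : (v:ℂ) ≠ 0) :
    ((homEval F u v : ℤ):ℂ) =
      (v:ℂ)^F.natDegree * Polynomial.eval ((u:ℂ)/v) (F.map (Int.castRingHom ℂ)) := by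
  rw [eval_eq_sum_range, natDegree_map_eq_of_injective intCastC_inj]
  rw [homEval]
  push_cast
  rw [Finset.mul_sum]
  refine Finset.sum_congr rfl fun i hi => ?_
  rw [Finset.mem_range, Nat.lt_succ_iff] at hi
  rw [coeff_map]
  simp only [eq_intCast]
  rw [div_pow]
  field_simp
  ring_nf
  rw [mul_assoc, ← pow_add]
  congr 2
  omega

lemma homEval_prod (F : Polynomial ℤ) (hF : F ≠ 0) (u v : ℤ) (hv : (v:ℂ) ≠ 0) :
    ((homEval F u v : ℤ):ℂ) =
      (F.map (Int.castRingHom ℂ)).leadingCoeff *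
        (((F.map (Int.castRingHom ℂ)).roots).map (fun z => (u:ℂ) - z * v)).prod := by
  set Fc := F.map (Int.castRingHom ℂ) with hFc
  have hFc0 : Fc ≠ 0 := by
    simpa [hFc, Polynomial.map_eq_zero_iff intCastC_inj] using hF
  have hsplit : Splits Fc := IsAlgClosed.splits Fc
  have hcard : Fc.roots.card = F.natDegree := by
    rw [splits_iff_card_roots.mp hsplit, hFc, natDegree_map_eq_of_injective intCastC_inj]
  rw [homEval_cast F u v hv, ← hFc]
  conv_lhs => rw [hsplit.eq_prod_roots]
  rw [eval_mul, eval_C, eval_multiset_prod, Multiset.map_map]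
  rw [mul_left_comm]
  congr 1
  have : (v:ℂ)^F.natDegree = (Fc.roots.map (fun _ => (v:ℂ))).prod := by
    rw [Multiset.map_const', Multiset.prod_replicate, hcard]
  rw [this, ← Multiset.prod_map_mul]
  congr 1
  refine Multiset.map_congr rfl fun z hz => ?_
  simp only [Function.comp_apply, eval_sub, eval_X, eval_C]
  field_simp

lemma norm_mprod (s : Multiset ℂ) : ‖s.prod‖ = (s.map (fun z => ‖z‖)).prod :=
  map_multiset_prod (normHom : ℂ →*₀ ℝ) s

lemma one_le_abs_intCast (n : ℤ) (h : n ≠ 0) : 1 ≤ ‖((n:ℤ):ℂ)‖ := by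
  rw [Complex.norm_intCast]
  exact_mod_cast Int.one_le_abs h

lemma homEval_mul (f g : Polynomial ℤ) (hf : f ≠ 0) (hg : g ≠ 0) (u v : ℤ)
    (hv : (v:ℂ) ≠ 0) : homEval (f*g) u v = homEval f u v * homEval g u v := by
  have : ((homEval (f*g) u v : ℤ):ℂ) = (((homEval f u v) * (homEval g u v) : ℤ):ℂ) := by
    rw [homEval_cast _ u v hv]
    push_cast
    rw [homEval_cast _ u v hv, homEval_cast _ u v hv,
      natDegree_mul hf hg, Polynomial.map_mul, eval_mul]
    push_cast
    ring
  exact_mod_cast this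

lemma abs_homEval_prod (F : Polynomial ℤ) (hF : F ≠ 0) (u v : ℤ) (hv : (v:ℂ) ≠ 0) :
    |((homEval F u v : ℤ):ℝ)| =
      ‖(F.map (Int.castRingHom ℂ)).leadingCoeff‖ *
        (((F.map (Int.castRingHom ℂ)).roots).map
          (fun z => ‖(u:ℂ) - z * v‖)).prod := by
  have : |((homEval F u v : ℤ):ℝ)| = ‖((homEval F u v : ℤ):ℂ)‖ := by
    rw [Complex.norm_intCast]
  rw [this, homEval_prod F hF u v hv, norm_mul, norm_mprod, Multiset.map_map]
  rfl

lemma card_roots_map (F : Polynomial ℤ) (hF : F ≠ 0) :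
    (F.map (Int.castRingHom ℂ)).roots.card = F.natDegree := by
  rw [splits_iff_card_roots.mp (IsAlgClosed.splits _),
    natDegree_map_eq_of_injective intCastC_inj]

lemma one_le_abs_lead (F : Polynomial ℤ) (hF : F ≠ 0) :
    1 ≤ ‖(F.map (Int.castRingHom ℂ)).leadingCoeff‖ := by
  rw [leadingCoeff_map_of_injective intCastC_inj]
  exact one_le_abs_intCast _ (by simpa using hF)

lemma lemA (F : Polynomial ℤ) (hF : F ≠ 0) (u v : ℤ) (hv : 0 < v) (c : ℝ) (hc : 0 ≤ c)
    (hroot : ∀ z ∈ (F.map (Int.castRingHom ℂ)).roots, c ≤ ‖(u:ℂ)/v - z‖) :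
    ((v:ℝ) * c) ^ F.natDegree ≤ |((homEval F u v : ℤ):ℝ)| := by
  have hvc : (v:ℂ) ≠ 0 := by exact_mod_cast hv.ne'
  rw [abs_homEval_prod F hF u v hvc]
  have key : ∀ z ∈ (F.map (Int.castRingHom ℂ)).roots,
      (v:ℝ) * c ≤ ‖(u:ℂ) - z * v‖ := by
    intro z hz
    have : (u:ℂ) - z * v = ((u:ℂ)/v - z) * v := by field_simp
    rw [this, norm_mul]
    have : ‖(v:ℂ)‖ = (v:ℝ) := by
      rw [show ((v:ℤ):ℂ) = ((v:ℝ):ℂ) by push_cast; ring, Complex.norm_real, Real.norm_eq_abs,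
        abs_of_pos (by exact_mod_cast hv)]
    rw [this, mul_comm ((v:ℝ)) c]
    exact mul_le_mul_of_nonneg_right (hroot z hz) (by positivity)
  calc ((v:ℝ) * c) ^ F.natDegree
      = (((F.map (Int.castRingHom ℂ)).roots).map (fun _ => (v:ℝ) * c)).prod := by
        rw [Multiset.map_const', Multiset.prod_replicate, card_roots_map F hF]
    _ ≤ (((F.map (Int.castRingHom ℂ)).roots).map
          (fun z => ‖(u:ℂ) - z * v‖)).prod :=
        Multiset.prod_map_le_prod_map₀ _ _ (fun z _ => by positivity) key
    _ ≤ _ := by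
        apply le_mul_of_one_le_left _ (one_le_abs_lead F hF)
        exact Multiset.prod_nonneg (by
          intro a ha
          obtain ⟨z, _, rfl⟩ := Multiset.mem_map.mp ha
          positivity)

lemma tc_prod (s : Multiset ℂ) :
    ((s.map fun z => (X : Polynomial ℂ) - C z).prod).trailingCoeff
      = (s.map fun z => if z = 0 then (1:ℂ) else -z).prod := by
  induction s using Multiset.induction with
  | empty => simp [trailingCoeff]
  | cons a s ih =>
    rw [Multiset.map_cons, Multiset.prod_cons, trailingCoeff_mul,
      Multiset.map_cons, Multiset.prod_cons, ih]
    congr 1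
    by_cases ha : a = 0
    · simp [ha, trailingCoeff, natTrailingDegree_X]
    · have h0 : (X - C a).coeff 0 ≠ 0 := by simp [ha]
      have : (X - C a).natTrailingDegree = 0 := by
        rw [natTrailingDegree_eq_zero]; right; exact h0
      rw [trailingCoeff, this, if_neg ha]
      simp

lemma one_le_lead_tc_prod (F : Polynomial ℤ) (hF : F ≠ 0) :
    1 ≤ ‖(F.map (Int.castRingHom ℂ)).leadingCoeff‖ *
      (((F.map (Int.castRingHom ℂ)).roots).map
        (fun z => if z = 0 then (1:ℝ) else ‖z‖)).prod := by
  set Fc := F.map (Int.castRingHom ℂ) with hFcdef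
  have hFc0 : Fc ≠ 0 := by
    simpa [hFcdef, Polynomial.map_eq_zero_iff intCastC_inj] using hF
  have h1 : 1 ≤ ‖Fc.trailingCoeff‖ := by
    have h2 : Fc.trailingCoeff = ((F.coeff Fc.natTrailingDegree : ℤ) : ℂ) := by
      rw [trailingCoeff, hFcdef, coeff_map]; rfl
    rw [h2]
    apply one_le_abs_intCast
    intro h
    apply hFc0
    apply trailingCoeff_eq_zero.mp
    rw [h2, h]; norm_num
  have h3 : Fc.trailingCoeff =
      Fc.leadingCoeff * ((Fc.roots).map fun z => if z = 0 then (1:ℂ) else -z).prod := by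
    conv_lhs => rw [(IsAlgClosed.splits Fc).eq_prod_roots]
    rw [trailingCoeff_mul, tc_prod]
    congr 1
    simp [trailingCoeff]
  rw [h3, norm_mul, norm_mprod, Multiset.map_map] at h1
  convert h1 using 3
  apply Multiset.map_congr rfl
  intro z hz
  by_cases h : z = 0 <;> simp [h]

lemma lemB (F : Polynomial ℤ) (hF : F ≠ 0) (u v : ℤ) (hu : u ≠ 0) (hv : 0 < v)
    (c : ℝ) (hc0 : 0 ≤ c) (hc1 : c ≤ 1)
    (hroot : ∀ z ∈ (F.map (Int.castRingHom ℂ)).roots, z ≠ 0 →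
      c ≤ ‖(v:ℂ)/u - z⁻¹‖) :
    (|(u:ℝ)| * c) ^ F.natDegree ≤ |((homEval F u v : ℤ):ℝ)| := by
  have hvc : (v:ℂ) ≠ 0 := by exact_mod_cast hv.ne'
  have huc : (u:ℂ) ≠ 0 := by exact_mod_cast hu
  have habsu : ‖((u:ℤ):ℂ)‖ = |(u:ℝ)| := by
    rw [Complex.norm_intCast]
  set Fc := F.map (Int.castRingHom ℂ) with hFcdef
  set w : ℂ → ℝ := fun z => if z = 0 then (1:ℝ) else ‖z‖ with hw
  have key : ∀ z ∈ Fc.roots, w z * (|(u:ℝ)| * c) ≤ ‖(u:ℂ) - z * v‖ := by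
    intro z hz
    by_cases h : z = 0
    · have hw0 : w 0 = 1 := by simp [hw]
      rw [h, hw0, one_mul, zero_mul, sub_zero, habsu]
      exact mul_le_of_le_one_right (abs_nonneg _) hc1
    · have heq : (u:ℂ) - z * v = -(z * u * ((v:ℂ)/u - z⁻¹)) := by
        field_simp
        ring
      rw [heq, norm_neg, norm_mul, norm_mul, habsu, hw]
      simp only [if_neg h]
      rw [mul_assoc]
      exact mul_le_mul_of_nonneg_left
        (mul_le_mul_of_nonneg_left (hroot z hz h) (abs_nonneg _))
        (norm_nonneg _)
  rw [abs_homEval_prod F hF u v hvc, ← hFcdef]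
  have hnn : (0:ℝ) ≤ |(u:ℝ)| * c := by positivity
  calc (|(u:ℝ)| * c) ^ F.natDegree
      = 1 * (|(u:ℝ)| * c) ^ F.natDegree := (one_mul _).symm
    _ ≤ (‖Fc.leadingCoeff‖ * ((Fc.roots).map w).prod) *
          (|(u:ℝ)| * c) ^ F.natDegree :=
        mul_le_mul_of_nonneg_right (one_le_lead_tc_prod F hF) (by positivity)
    _ = ‖Fc.leadingCoeff‖ *
          ((Fc.roots).map (fun z => w z * (|(u:ℝ)| * c))).prod := by
        rw [Multiset.prod_map_mul, Multiset.map_const', Multiset.prod_replicate,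
          card_roots_map F hF]
        ring
    _ ≤ ‖Fc.leadingCoeff‖ *
          ((Fc.roots).map (fun z => ‖(u:ℂ) - z * v‖)).prod := by
        apply mul_le_mul_of_nonneg_left _ (norm_nonneg _)
        apply Multiset.prod_map_le_prod_map₀
        · intro z hz
          have : 0 ≤ w z := by rw [hw]; dsimp only; split <;> positivity
          positivity
        · exact key

lemma root_aeval (p q : Polynomial ℤ) (z : ℂ)
    (hz : z ∈ (p.map (Int.castRingHom ℂ)).roots) : aeval z (p * q) = 0 := by
  have h := (Polynomial.mem_roots'.mp hz).2
  have hp : aeval z p = 0 := by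
    rwa [aeval_def, ← eval_map, algebraMap_int_eq]
  rw [map_mul, hp, zero_mul]

lemma no_common_root (f g : Polynomial ℤ)
    (hcop : IsCoprime (f.map (Int.castRingHom ℚ)) (g.map (Int.castRingHom ℚ)))
    (z : ℂ) (hzf : z ∈ (f.map (Int.castRingHom ℂ)).roots)
    (hzg : z ∈ (g.map (Int.castRingHom ℂ)).roots) : False := by
  have hC : IsCoprime (f.map (Int.castRingHom ℂ)) (g.map (Int.castRingHom ℂ)) := by
    have h := hcop.map (mapRingHom (algebraMap ℚ ℂ))
    simp only [coe_mapRingHom, Polynomial.map_map] at h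
    rwa [Subsingleton.elim ((algebraMap ℚ ℂ).comp (Int.castRingHom ℚ))
      (Int.castRingHom ℂ)] at h
  obtain ⟨a, b, hab⟩ := hC
  have e1 : eval z (f.map (Int.castRingHom ℂ)) = 0 := (Polynomial.mem_roots'.mp hzf).2
  have e2 : eval z (g.map (Int.castRingHom ℂ)) = 0 := (Polynomial.mem_roots'.mp hzg).2
  have h := congrArg (eval z) hab
  simp only [eval_add, eval_mul, e1, e2, eval_one, mul_zero, add_zero, zero_add] at h
  exact one_ne_zero h.symm

lemma assemble (p q : Polynomial ℤ) (hp : p ≠ 0) (hq : q ≠ 0) (u v : ℤ)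
    (hv : (v:ℂ) ≠ 0) (hqne : homEval q u v ≠ 0) (d : ℕ) (hdp : d ≤ p.natDegree)
    (B : ℝ) (hB : 1 ≤ B)
    (hbound : B ^ p.natDegree ≤ |((homEval p u v : ℤ):ℝ)|) :
    B ^ d ≤ |((homEval (p*q) u v : ℤ):ℝ)| := by
  rw [homEval_mul p q hp hq u v hv]
  push_cast
  rw [abs_mul]
  have h1 : (1:ℝ) ≤ |((homEval q u v : ℤ):ℝ)| := by
    have := Int.one_le_abs hqne
    exact_mod_cast this
  calc B ^ d ≤ B ^ p.natDegree := pow_le_pow_right₀ hB hdp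
    _ ≤ |((homEval p u v : ℤ):ℝ)| := hbound
    _ ≤ _ := le_mul_of_one_le_right (abs_nonneg _) h1

/-- Let `f, g ∈ ℤ[x]` be coprime polynomials with `ψ² = f g`, and suppose any two distinct
roots `x₀ ≠ x₁` of `ψ²` satisfy `|x₀ − x₁| ≥ ε` and (when nonzero) `|x₀⁻¹ − x₁⁻¹| ≥ ε`,
where `0 < ε ≤ 2`. Let `u, v` be coprime integers with `v ≥ 1`,
`max(|u|, v) ≥ (ε/2)⁻¹`, and `ψ²(u,v) ≠ 0`. Then
`|ψ²(u,v)| ≥ max(|u|, v)^d (ε/2)^d` where `d = min(deg f, deg g)`. -/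
theorem stmt_18 (f g : Polynomial ℤ) (hf : f ≠ 0) (hg : g ≠ 0)
    (hcop : IsCoprime (f.map (Int.castRingHom ℚ)) (g.map (Int.castRingHom ℚ)))
    (ε : ℝ) (hε0 : 0 < ε) (hε2 : ε ≤ 2)
    (hsep : ∀ x₀ x₁ : ℂ, aeval x₀ (f * g) = 0 → aeval x₁ (f * g) = 0 → x₀ ≠ x₁ →
      ε ≤ ‖x₀ - x₁‖ ∧
        (x₀ ≠ 0 → x₁ ≠ 0 → ε ≤ ‖x₀⁻¹ - x₁⁻¹‖))
    (u v : ℤ) (hcopuv : IsCoprime u v) (hv : 1 ≤ v)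
    (hbig : (ε / 2)⁻¹ ≤ ((max |u| v : ℤ) : ℝ))
    (hne : homEval (f * g) u v ≠ 0)
    (d : ℕ) (hd : d = min f.natDegree g.natDegree) :
    ((max |u| v : ℤ) : ℝ) ^ d * (ε / 2) ^ d ≤ |((homEval (f * g) u v : ℤ) : ℝ)| := by
  set c : ℝ := ε / 2 with hcdef
  have hc0 : 0 < c := by positivity
  have hc1 : c ≤ 1 := by rw [hcdef]; linarith
  set M : ℝ := ((max |u| v : ℤ) : ℝ) with hMdef
  have hv0 : (0:ℤ) < v := hv
  have hvc : (v:ℂ) ≠ 0 := by exact_mod_cast hv0.ne'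
  have hM1 : (1:ℝ) ≤ M := by
    rw [hMdef]
    exact_mod_cast le_trans hv (le_max_right |u| v)
  have hMc : 1 ≤ M * c := by
    have h := mul_le_mul_of_nonneg_right hbig hc0.le
    rwa [inv_mul_cancel₀ hc0.ne'] at h
  have hdf : d ≤ f.natDegree := hd ▸ min_le_left _ _
  have hdg : d ≤ g.natDegree := hd ▸ min_le_right _ _
  -- nonvanishing of the factors
  have hmul := homEval_mul f g hf hg u v hvc
  have hfne : homEval f u v ≠ 0 := fun h => hne (by rw [hmul, h, zero_mul])
  have hgne : homEval g u v ≠ 0 := fun h => hne (by rw [hmul, h, mul_zero])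
  -- reduce goal
  rw [← mul_pow]
  rcases le_or_gt |u| v with huv | huv
  · -- M = v
    have hMv : M = (v:ℝ) := by rw [hMdef, max_eq_right huv]
    by_cases hclose : ∃ z ∈ (f.map (Int.castRingHom ℂ)).roots,
        ‖(u:ℂ)/v - z‖ < c
    · obtain ⟨z₀, hz₀, hz₀x⟩ := hclose
      have hgroot : ∀ w ∈ (g.map (Int.castRingHom ℂ)).roots,
          c ≤ ‖(u:ℂ)/v - w‖ := by
        intro w hw
        have hzw : z₀ ≠ w := fun h => no_common_root f g hcop z₀ hz₀ (h ▸ hw)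
        have h1 : aeval z₀ (f * g) = 0 := root_aeval f g z₀ hz₀
        have h2 : aeval w (f * g) = 0 := by
          rw [mul_comm]; exact root_aeval g f w hw
        have hsep' := (hsep z₀ w h1 h2 hzw).1
        have htri : ‖z₀ - w‖ ≤
            ‖z₀ - (u:ℂ)/v‖ + ‖(u:ℂ)/v - w‖ :=
          norm_sub_le_norm_sub_add_norm_sub _ _ _
        have habs : ‖z₀ - (u:ℂ)/v‖ = ‖(u:ℂ)/v - z₀‖ :=
          norm_sub_rev _ _
        have hε : ε = 2 * c := by rw [hcdef]; ring
        rw [hε] at hsep'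
        rw [habs] at htri
        linarith
      rw [mul_comm f g]
      apply assemble g f hg hf u v hvc hfne d hdg _ hMc
      calc (M * c) ^ g.natDegree = ((v:ℝ) * c) ^ g.natDegree := by rw [hMv]
        _ ≤ _ := lemA g hg u v hv0 c hc0.le hgroot
    · push_neg at hclose
      apply assemble f g hf hg u v hvc hgne d hdf _ hMc
      calc (M * c) ^ f.natDegree = ((v:ℝ) * c) ^ f.natDegree := by rw [hMv]
        _ ≤ _ := lemA f hf u v hv0 c hc0.le hclose
  · -- M = |u|
    have hu : u ≠ 0 := by
      intro h; rw [h] at huv; simp at huv; omega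
    have hMu : M = |(u:ℝ)| := by
      rw [hMdef, max_eq_left huv.le]
      push_cast
      rfl
    by_cases hclose : ∃ z ∈ (f.map (Int.castRingHom ℂ)).roots,
        z ≠ 0 ∧ ‖(v:ℂ)/u - z⁻¹‖ < c
    · obtain ⟨z₀, hz₀, hz₀0, hz₀x⟩ := hclose
      have hgroot : ∀ w ∈ (g.map (Int.castRingHom ℂ)).roots, w ≠ 0 →
          c ≤ ‖(v:ℂ)/u - w⁻¹‖ := by
        intro w hw hw0
        have hzw : z₀ ≠ w := fun h => no_common_root f g hcop z₀ hz₀ (h ▸ hw)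
        have h1 : aeval z₀ (f * g) = 0 := root_aeval f g z₀ hz₀
        have h2 : aeval w (f * g) = 0 := by
          rw [mul_comm]; exact root_aeval g f w hw
        have hsep' := (hsep z₀ w h1 h2 hzw).2 hz₀0 hw0
        have htri : ‖z₀⁻¹ - w⁻¹‖ ≤
            ‖z₀⁻¹ - (v:ℂ)/u‖ + ‖(v:ℂ)/u - w⁻¹‖ :=
          norm_sub_le_norm_sub_add_norm_sub _ _ _
        have habs : ‖z₀⁻¹ - (v:ℂ)/u‖ = ‖(v:ℂ)/u - z₀⁻¹‖ :=
          norm_sub_rev _ _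
        have hε : ε = 2 * c := by rw [hcdef]; ring
        rw [hε] at hsep'
        rw [habs] at htri
        linarith
      rw [mul_comm f g]
      apply assemble g f hg hf u v hvc hfne d hdg _ hMc
      calc (M * c) ^ g.natDegree = (|(u:ℝ)| * c) ^ g.natDegree := by rw [hMu]
        _ ≤ _ := lemB g hg u v hu hv0 c hc0.le hc1 hgroot
    · push_neg at hclose
      have hfroot : ∀ z ∈ (f.map (Int.castRingHom ℂ)).roots, z ≠ 0 →
          c ≤ ‖(v:ℂ)/u - z⁻¹‖ := fun z hz hz0 => hclose z hz hz0
      apply assemble f g hf hg u v hvc hgne d hdf _ hMc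
      calc (M * c) ^ f.natDegree = (|(u:ℝ)| * c) ^ f.natDegree := by rw [hMu]
        _ ≤ _ := lemB f hf u v hu hv0 c hc0.le hc1 hfroot
end
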